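/- Let f be a nonzero real polynomial in n variables with support F ⊆ ℕⁿ, written f(x) = Σ_{ν∈F} c_ν x^ν with c_ν ≠ 0. Let a ∈ ℕⁿ with aᵢ ≥ 1 for all i, set m(a) = min_{ν∈F} ⟨a,ν⟩, γ(a) = { ν ∈ F : ⟨a,ν⟩ = m(a) }, and f_{γ(a)}(x) = Σ_{ν∈γ(a)} c_ν x^ν. Suppose c ∈ ℝⁿ has cᵢ ≠ 0 for all i and f_{γ(a)}(c) ≠ 0. Then the arc α(t) = (c₁ t^{a₁}, …, cₙ t^{aₙ}) satisfies: the formal power series f(α(t)) has order exactly m(a), i.e. its coefficient of t^j vanishes for j < m(a) and its coefficient of t^{m(a)} is nonzero. -/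

import Mathlib

/-- If `f_{γ(a)}(c) ≠ 0` for a point `c` with all coordinates nonzero, then the
arc `α(t) = (c₁ t^{a₁},…,cₙ t^{aₙ})` satisfies `ord f(α(t)) = m(a)`. -/
theorem arc_order_eq_multiplicity (n : ℕ) (F : Finset (Fin n → ℕ)) (hF : F.Nonempty)
    (d : (Fin n → ℕ) → ℝ) (hd : ∀ ν ∈ F, d ν ≠ 0)
    (a : Fin n → ℕ) (ha : ∀ i, 1 ≤ a i)
    (m : ℕ) (hm : m = F.inf' hF fun ν => ∑ i, a i * ν i)
    (c : Fin n → ℝ) (hc : ∀ i, c i ≠ 0)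
    (hface : ∑ ν ∈ F.filter (fun ν => ∑ i, a i * ν i = m),
      d ν * ∏ i, (c i) ^ (ν i) ≠ 0)
    (fα : PowerSeries ℝ)
    (hfα : fα = ∑ ν ∈ F, PowerSeries.C (d ν) *
      ∏ i, (PowerSeries.C (c i) * (PowerSeries.X : PowerSeries ℝ) ^ (a i)) ^ (ν i)) :
    (∀ j : ℕ, j < m → PowerSeries.coeff j fα = 0) ∧
    PowerSeries.coeff m fα ≠ 0 := by
  have hterm : ∀ ν : Fin n → ℕ,
      (∏ i, (PowerSeries.C (c i) * (PowerSeries.X : PowerSeries ℝ) ^ (a i)) ^ (ν i))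
      = PowerSeries.C (∏ i, c i ^ ν i) *
        (PowerSeries.X : PowerSeries ℝ) ^ (∑ i, a i * ν i) := by
    intro ν
    have h1 : ∀ i : Fin n,
        (PowerSeries.C (c i) * (PowerSeries.X : PowerSeries ℝ) ^ (a i)) ^ (ν i)
        = PowerSeries.C (c i ^ ν i) *
          (PowerSeries.X : PowerSeries ℝ) ^ (a i * ν i) := by
      intro i
      rw [mul_pow, ← map_pow, ← pow_mul]
    simp_rw [h1]
    rw [Finset.prod_mul_distrib, map_prod, ← Finset.prod_pow_eq_pow_sum]
  have hcoeff : ∀ j : ℕ, PowerSeries.coeff j fα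
      = ∑ ν ∈ F, if (∑ i, a i * ν i) = j then d ν * ∏ i, c i ^ ν i else 0 := by
    intro j
    rw [hfα, map_sum]
    refine Finset.sum_congr rfl fun ν _ => ?_
    rw [hterm, ← mul_assoc, ← map_mul, PowerSeries.coeff_C_mul,
      PowerSeries.coeff_X_pow]
    by_cases h : (∑ i, a i * ν i) = j
    · simp [h, eq_comm]
    · simp [h, Ne.symm h]
  constructor
  · intro j hj
    rw [hcoeff]
    refine Finset.sum_eq_zero fun ν hν => ?_
    have : m ≤ ∑ i, a i * ν i := hm ▸ Finset.inf'_le _ hν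
    have hne : (∑ i, a i * ν i) ≠ j := (hj.trans_le this).ne'
    simp [hne]
  · rw [hcoeff m, ← Finset.sum_filter]
    exact hface
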